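/- (Approximate optimal transition identity.) Assume in addition that the norm ‖·‖ is of class C¹ on ℝ^d ∖ {0} (the unit ball has C¹ boundary). Let t' ∈ [0,T], ε > 0, x₀' ∈ ℝ^d, and suppose x₁ minimizes x ↦ E(t',x) + Ψ(x − x₀') over the closed ball {x : ‖x − x₀'‖ ≤ ε}. Then ⟨−D_x E(t',x₁), x₁ − x₀'⟩ = Ψ(x₁ − x₀') + (inf_{η ∈ ∂Ψ(0)} ‖η + D_x E(t',x₁)‖_*) · ‖x₁ − x₀'‖, and the infimum over ∂Ψ(0) is attained. -/

import Mathlib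

open Filter MeasureTheory Set
open scoped Topology NNReal

section Setup

variable {X : Type*} [NormedAddCommGroup X] [NormedSpace ℝ X]

/-- The set of partition sums defining the `Ψ`-dissipation of `u` on `[a,b]`:
sums `∑ Ψ(u(s_i) − u(s_{i−1}))` over finite strictly increasing partitions
`a = s₀ < s₁ < ⋯ < s_n = b`. -/
def dissSums (Ψ : X → ℝ) (u : ℝ → X) (a b : ℝ) : Set ℝ :=
  { S | ∃ (n : ℕ) (σ : Fin (n + 1) → ℝ), StrictMono σ ∧ σ 0 = a ∧ σ (Fin.last n) = b ∧
      S = ∑ i : Fin n, Ψ (u (σ i.succ) - u (σ i.castSucc)) }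

/-- The `Ψ`-dissipation `Diss_Ψ(u;[a,b])`. -/
noncomputable def dissTV (Ψ : X → ℝ) (u : ℝ → X) (a b : ℝ) : ℝ :=
  sSup (dissSums Ψ u a b)

/-- The subdifferential `∂Ψ(0) = {η : ⟨η,v⟩ ≤ Ψ(v) for all v}`. -/
def subdiffZero (Ψ : X → ℝ) : Set (X →L[ℝ] ℝ) :=
  { η | ∀ v, η v ≤ Ψ v }

/-- `inf_{η ∈ ∂Ψ(0)} ‖ξ + η‖_*`, where `‖·‖_*` is the dual (operator) norm. -/
noncomputable def distToSubdiff (Ψ : X → ℝ) (ξ : X →L[ℝ] ℝ) : ℝ :=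
  sInf ((fun η => ‖ξ + η‖) '' subdiffZero Ψ)

/-- The cost `Δ_new(t;a,b)`: infimum over Lipschitz paths `γ : [0,1] → X` with
`γ(0)=a`, `γ(1)=b` of `∫₀¹ Ψ(γ'(s)) + (inf_{z∈∂Ψ(0)} ‖D_xE(t,γ(s))+z‖_*)·‖γ'(s)‖ ds`. -/
noncomputable def deltaNew (DE : ℝ → X → X →L[ℝ] ℝ) (Ψ : X → ℝ) (t : ℝ) (a b : X) : ℝ :=
  sInf { c | ∃ (K : ℝ≥0) (γ : ℝ → X), LipschitzOnWith K γ (Icc 0 1) ∧ γ 0 = a ∧ γ 1 = b ∧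
      c = ∫ s in (0:ℝ)..1, (Ψ (deriv γ s) + distToSubdiff Ψ (DE t (γ s)) * ‖deriv γ s‖) }

/-- The new dissipation `Diss_new(u;[t₁,t₂])`, with prescribed one-sided limit
functions `uL`, `uR`, summing over the jump set the corrections `Δ_new − Ψ`. -/
noncomputable def dissNew (DE : ℝ → X → X →L[ℝ] ℝ) (Ψ : X → ℝ)
    (u uL uR : ℝ → X) (t₁ t₂ : ℝ) : ℝ :=
  dissTV Ψ u t₁ t₂
    + ∑' t : ({ s | ¬ ContinuousAt u s } ∩ Ioo t₁ t₂ : Set ℝ),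
        (deltaNew DE Ψ (t : ℝ) (uL (t : ℝ)) (u (t : ℝ)) +
          deltaNew DE Ψ (t : ℝ) (u (t : ℝ)) (uR (t : ℝ))
          - Ψ (u (t : ℝ) - uL (t : ℝ)) - Ψ (uR (t : ℝ) - u (t : ℝ)))
    + (deltaNew DE Ψ t₁ (u t₁) (uR t₁) - Ψ (uR t₁ - u t₁))
    + (deltaNew DE Ψ t₂ (uL t₂) (u t₂) - Ψ (u t₂ - uL t₂))

/-- `pts` is a discretized solution with initial datum `x₀`, neighborhood size `ε`,
time-step `τ` and `N` steps: `pts 0 = x₀` and each `pts i` minimizes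
`x ↦ E(iτ, x) + Ψ(x − pts (i−1))` over the closed ball of radius `ε` around `pts (i−1)`. -/
def IsDiscreteSol (E : ℝ → X → ℝ) (Ψ : X → ℝ) (x₀ : X) (ε τ : ℝ) (N : ℕ)
    (pts : ℕ → X) : Prop :=
  pts 0 = x₀ ∧ ∀ i : ℕ, 1 ≤ i → i ≤ N →
    ‖pts i - pts (i - 1)‖ ≤ ε ∧
    ∀ x : X, ‖x - pts (i - 1)‖ ≤ ε →
      E ((i : ℝ) * τ) (pts i) + Ψ (pts i - pts (i - 1)) ≤
        E ((i : ℝ) * τ) x + Ψ (x - pts (i - 1))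

/-- The piecewise-constant interpolant `x^{ε,τ}`: equal to `pts (i−1)` on
`[(i−1)τ, iτ)` for `i = 1,…,N`, and to `pts N` on `[Nτ, T]`. -/
noncomputable def discInterp (pts : ℕ → X) (τ : ℝ) (N : ℕ) (t : ℝ) : X :=
  pts (min N ⌊t / τ⌋₊)

end Setup

set_option maxHeartbeats 1000000 in
private theorem stmt_15_aux
    {X : Type*} [NormedAddCommGroup X] [NormedSpace ℝ X] [FiniteDimensional ℝ X]
    [Nontrivial X]
    (hnorm : ContDiffOn ℝ 1 (fun x : X => ‖x‖) {(0 : X)}ᶜ)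
    (T : ℝ) (hT : 0 < T)
    (E Et : ℝ → X → ℝ) (DE : ℝ → X → X →L[ℝ] ℝ)
    (hEnn : ∀ t ∈ Set.Icc (0:ℝ) T, ∀ x : X, 0 ≤ E t x)
    (hEt : ∀ x : X, ∀ t ∈ Set.Icc (0:ℝ) T,
      HasDerivWithinAt (fun s => E s x) (Et t x) (Set.Icc 0 T) t)
    (hDE : ∀ t ∈ Set.Icc (0:ℝ) T, ∀ x : X, HasFDerivAt (fun y => E t y) (DE t x) x)
    (hEtc : ContinuousOn (fun p : ℝ × X => Et p.1 p.2) (Set.Icc 0 T ×ˢ Set.univ))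
    (hDEc : ContinuousOn (fun p : ℝ × X => DE p.1 p.2) (Set.Icc 0 T ×ˢ Set.univ))
    (Ψ : X → ℝ) (hΨnn : ∀ v, 0 ≤ Ψ v) (hΨconv : ConvexOn ℝ Set.univ Ψ)
    (hΨhom : ∀ c : ℝ, 0 ≤ c → ∀ v : X, Ψ (c • v) = c * Ψ v)
    (hΨpos : ∀ v : X, v ≠ 0 → 0 < Ψ v)
    (t' : ℝ) (ht' : t' ∈ Set.Icc (0:ℝ) T)
    (ε : ℝ) (hε : 0 < ε) (x₀' x₁ : X)
    (hx₁mem : ‖x₁ - x₀'‖ ≤ ε)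
    (hx₁min : ∀ x : X, ‖x - x₀'‖ ≤ ε →
      E t' x₁ + Ψ (x₁ - x₀') ≤ E t' x + Ψ (x - x₀')) :
    (-(DE t' x₁)) (x₁ - x₀') =
      Ψ (x₁ - x₀') + distToSubdiff Ψ (DE t' x₁) * ‖x₁ - x₀'‖ ∧
    ∃ η ∈ subdiffZero Ψ, ‖DE t' x₁ + η‖ = distToSubdiff Ψ (DE t' x₁) := by
  set ξ : X →L[ℝ] ℝ := DE t' x₁ with hξ
  set v : X := x₁ - x₀' with hv
  have hΨ0 : Ψ 0 = 0 := by
    have := hΨhom 0 le_rfl 0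
    simpa using this
  have hΨsub : ∀ a b : X, Ψ (a + b) ≤ Ψ a + Ψ b := by
    intro a b
    have h2 : Ψ (a + b) = 2 * Ψ ((1/2 : ℝ) • a + (1/2 : ℝ) • b) := by
      rw [← hΨhom 2 (by norm_num)]
      congr 1
      rw [smul_add, smul_smul, smul_smul]
      norm_num
    have h3 := hΨconv.2 (mem_univ a) (mem_univ b) (by norm_num : (0:ℝ) ≤ 1/2)
      (by norm_num : (0:ℝ) ≤ 1/2) (by norm_num)
    rw [smul_eq_mul, smul_eq_mul] at h3
    rw [h2]; linarith
  -- the key variational inequality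
  have star : ∀ x : X, ‖x - x₀'‖ ≤ ε →
      Ψ v - Ψ (x - x₀') ≤ ξ (x - x₁) := by
    intro x hx
    have hg : HasDerivAt (fun s : ℝ => E t' (x₁ + s • (x - x₁))) (ξ (x - x₁)) 0 := by
      have h1 : HasDerivAt (fun s : ℝ => x₁ + s • (x - x₁)) (x - x₁) 0 := by
        simpa using ((hasDerivAt_id (0:ℝ)).smul_const (x - x₁)).const_add x₁
      have h2 : HasFDerivAt (fun y => E t' y) ξ (x₁ + (0:ℝ) • (x - x₁)) := by
        simpa using hDE t' ht' x₁
      exact h2.comp_hasDerivAt 0 h1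
    have hslope' : Tendsto (slope (fun s : ℝ => E t' (x₁ + s • (x - x₁))) 0)
        (𝓝[>] 0) (𝓝 (ξ (x - x₁))) :=
      (hasDerivAt_iff_tendsto_slope.mp hg).mono_left
        (nhdsWithin_mono 0 (fun s hs => ne_of_gt hs))
    refine ge_of_tendsto hslope' ?_
    filter_upwards [Ioo_mem_nhdsGT_of_mem (Set.mem_Ico.mpr ⟨le_rfl, one_pos⟩)]
      with s hs
    obtain ⟨hs0, hs1⟩ := hs
    have hpt : x₁ + s • (x - x₁) - x₀' = (1 - s) • v + s • (x - x₀') := by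
      rw [hv]; module
    have hball : ‖x₁ + s • (x - x₁) - x₀'‖ ≤ ε := by
      rw [hpt]
      calc ‖(1 - s) • v + s • (x - x₀')‖ ≤ ‖(1-s) • v‖ + ‖s • (x - x₀')‖ :=
            norm_add_le _ _
        _ = (1-s) * ‖v‖ + s * ‖x - x₀'‖ := by
            rw [norm_smul, norm_smul, Real.norm_eq_abs, Real.norm_eq_abs,
              abs_of_nonneg (by linarith), abs_of_nonneg hs0.le]
        _ ≤ (1-s) * ε + s * ε := by
            have h1 : 0 ≤ 1 - s := by linarith
            have h2 := mul_le_mul_of_nonneg_left hx₁mem h1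
            have h3 := mul_le_mul_of_nonneg_left hx hs0.le
            linarith
        _ = ε := by ring
    have hmin := hx₁min _ hball
    have hcvx : Ψ (x₁ + s • (x - x₁) - x₀') ≤ (1 - s) * Ψ v + s * Ψ (x - x₀') := by
      rw [hpt]
      have := hΨconv.2 (mem_univ v) (mem_univ (x - x₀')) (by linarith : (0:ℝ) ≤ 1 - s)
        hs0.le (by ring)
      simpa [smul_eq_mul] using this
    rw [slope_def_field, le_div_iff₀ (by simpa using hs0)]
    have h0 : E t' (x₁ + (0:ℝ) • (x - x₁)) = E t' x₁ := by simp
    rw [h0]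
    nlinarith [hmin, hcvx]
  by_cases hv0 : v = 0
  · -- x₁ = x₀' : then -ξ ∈ ∂Ψ(0) and everything is 0
    have hmem : -ξ ∈ subdiffZero Ψ := by
      intro w
      rcases eq_or_ne w 0 with rfl | hw
      · simp [hΨ0]
      · set c : ℝ := ε / (‖w‖ + 1) with hc
        have hwpos : (0:ℝ) < ‖w‖ + 1 := by positivity
        have hcpos : 0 < c := div_pos hε hwpos
        have hcw : ‖(x₀' + c • w) - x₀'‖ ≤ ε := by
          rw [add_sub_cancel_left, norm_smul, Real.norm_eq_abs, abs_of_nonneg hcpos.le]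
          rw [hc, div_mul_eq_mul_div, div_le_iff₀ hwpos]
          nlinarith [norm_nonneg w, hε]
        have hst := star _ hcw
        rw [add_sub_cancel_left] at hst
        have hx10 : x₁ = x₀' := by
          have h := hv0
          rw [hv] at h
          exact sub_eq_zero.mp h
        have hxx : x₀' + c • w - x₁ = c • w := by rw [hx10]; abel
        rw [hxx, hΨhom c hcpos.le, hv0, hΨ0] at hst
        have hsm : ξ (c • w) = c * ξ w := by
          rw [ξ.map_smul]; rfl
        rw [hsm] at hst
        have h4 : c * (-(ξ w)) ≤ c * Ψ w := by linarith
        have h5 : -(ξ w) ≤ Ψ w := le_of_mul_le_mul_left h4 hcpos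
        simpa using h5
    have hd : distToSubdiff Ψ ξ = 0 := by
      apply le_antisymm
      · have h0 : (0:ℝ) ∈ (fun η => ‖ξ + η‖) '' subdiffZero Ψ :=
          ⟨-ξ, hmem, by simp⟩
        exact csInf_le ⟨0, by rintro y ⟨η, _, rfl⟩; exact norm_nonneg _⟩ h0
      · refine le_csInf ⟨‖ξ + -ξ‖, -ξ, hmem, rfl⟩ ?_
        rintro y ⟨η, _, rfl⟩; exact norm_nonneg _
    refine ⟨?_, ⟨-ξ, hmem, by simp [hd]⟩⟩
    rw [hv0]
    simp [hd, hΨ0]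
  · -- main case v ≠ 0
    set r : ℝ := ‖v‖ with hr
    have hrpos : 0 < r := norm_pos_iff.mpr hv0
    have hdiff : DifferentiableAt ℝ (fun x : X => ‖x‖) v := by
      have : ContDiffAt ℝ 1 (fun x : X => ‖x‖) v :=
        hnorm.contDiffAt (isOpen_compl_singleton.mem_nhds hv0)
      exact this.differentiableAt one_ne_zero
    set n : X →L[ℝ] ℝ := fderiv ℝ (fun x : X => ‖x‖) v with hn
    have hfd : HasFDerivAt (fun x : X => ‖x‖) n v := hdiff.hasFDerivAt
    have hnv : n v = r := by
      have h1 : HasDerivAt (fun t : ℝ => ‖t • v‖) (n v) 1 := by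
        have hs : HasDerivAt (fun t : ℝ => t • v) v 1 := by
          simpa using (hasDerivAt_id (1:ℝ)).smul_const v
        have h2 : HasFDerivAt (fun x : X => ‖x‖) n ((1:ℝ) • v) := by simpa using hfd
        exact h2.comp_hasDerivAt 1 hs
      have h2 : HasDerivAt (fun t : ℝ => t * r) (n v) 1 := by
        apply h1.congr_of_eventuallyEq
        filter_upwards [Ioi_mem_nhds one_pos] with t ht
        rw [norm_smul, Real.norm_eq_abs, abs_of_pos ht]
      have h3 : HasDerivAt (fun t : ℝ => t * r) r 1 := by
        simpa using (hasDerivAt_id (1:ℝ)).mul_const r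
      exact h2.unique h3
    have hderivnorm : ∀ w : X, HasDerivAt (fun s : ℝ => ‖v + s • w‖) (n w) 0 := by
      intro w
      have hs : HasDerivAt (fun s : ℝ => v + s • w) w 0 := by
        simpa using ((hasDerivAt_id (0:ℝ)).smul_const w).const_add v
      have h2 : HasFDerivAt (fun x : X => ‖x‖) n (v + (0:ℝ) • w) := by simpa using hfd
      exact h2.comp_hasDerivAt 0 hs
    have hnle : ∀ w : X, |n w| ≤ ‖w‖ := by
      intro w
      have habs : Tendsto (fun s => |slope (fun s : ℝ => ‖v + s • w‖) 0 s|)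
          (𝓝[≠] 0) (𝓝 |n w|) :=
        (hasDerivAt_iff_tendsto_slope.mp (hderivnorm w)).abs
      refine le_of_tendsto habs ?_
      filter_upwards [self_mem_nhdsWithin] with s hs
      rw [slope_def_field, abs_div]
      rw [div_le_iff₀ (abs_pos.mpr (sub_ne_zero.mpr hs))]
      have h2 : |‖v + s • w‖ - ‖v + (0:ℝ) • w‖| ≤ ‖(s - 0) • w‖ := by
        have := abs_norm_sub_norm_le (v + s • w) (v + (0:ℝ) • w)
        calc |‖v + s • w‖ - ‖v + (0:ℝ) • w‖| ≤ ‖(v + s • w) - (v + (0:ℝ) • w)‖ := this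
          _ = ‖(s - 0) • w‖ := by congr 1; module
      calc |‖v + s • w‖ - ‖v + (0:ℝ) • w‖| ≤ ‖(s-0) • w‖ := h2
        _ = ‖w‖ * |s - 0| := by rw [norm_smul, Real.norm_eq_abs]; ring
    have hnorm1 : ‖n‖ = 1 := by
      apply le_antisymm
      · refine n.opNorm_le_bound zero_le_one (fun w => ?_)
        rw [one_mul]
        simpa using hnle w
      · have h1 : ‖n v‖ ≤ ‖n‖ * ‖v‖ := n.le_opNorm v
        rw [hnv] at h1
        have h2 : r ≤ ‖n‖ * r := by
          calc r = ‖r‖ := (Real.norm_of_nonneg hrpos.le).symm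
            _ ≤ ‖n‖ * ‖v‖ := h1
            _ = ‖n‖ * r := rfl
        exact le_of_mul_le_mul_right (by linarith) hrpos
    set lam : ℝ := ((-ξ) v - Ψ v) / r with hlam
    have hξv : Ψ v ≤ (-ξ) v := by
      have h0 : ‖x₀' - x₀'‖ ≤ ε := by simp [hε.le]
      have hst := star x₀' h0
      have hxv : x₀' - x₁ = -v := by rw [hv]; abel
      rw [hxv, ξ.map_neg, sub_self, hΨ0] at hst
      simpa using hst
    have hlamnn : 0 ≤ lam := div_nonneg (by linarith) hrpos.le
    have hlamr : lam * r = (-ξ) v - Ψ v := by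
      rw [hlam]; field_simp
    -- key subgradient inequality
    have hkey : ∀ w : X, (-ξ) w - lam * (n w) ≤ Ψ w := by
      intro w
      have hF : Tendsto (fun s : ℝ =>
          (slope (fun s : ℝ => r / ‖v + s • w‖) 0 s) * (Ψ v - (-ξ) v)
            + (r / ‖v + s • w‖) * (Ψ w - (-ξ) w)) (𝓝[>] 0)
          (𝓝 ((-(n w) / r) * (Ψ v - (-ξ) v) + 1 * (Ψ w - (-ξ) w))) := by
        have hh : HasDerivAt (fun s : ℝ => r / ‖v + s • w‖) (-(n w) / r) 0 := by
          have hne : ‖v + (0:ℝ) • w‖ ≠ 0 := by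
            simpa using hv0
          have := (hasDerivAt_const (0:ℝ) r).div (hderivnorm w) hne
          refine this.congr_deriv ?_
          have h0 : ‖v + (0:ℝ) • w‖ = r := by simp [hr]
          rw [h0]
          field_simp
          ring
        have hslopeh : Tendsto (slope (fun s : ℝ => r / ‖v + s • w‖) 0) (𝓝[>] 0)
            (𝓝 (-(n w) / r)) :=
          (hasDerivAt_iff_tendsto_slope.mp hh).mono_left
            (nhdsWithin_mono 0 (fun s hs => ne_of_gt hs))
        have hcont : Tendsto (fun s : ℝ => r / ‖v + s • w‖) (𝓝[>] 0) (𝓝 1) := by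
          have h1 : ContinuousAt (fun s : ℝ => r / ‖v + s • w‖) 0 := hh.continuousAt
          have h2 := h1.tendsto.mono_left (nhdsWithin_le_nhds : 𝓝[>] (0:ℝ) ≤ 𝓝 0)
          have h3 : r / ‖v + (0:ℝ) • w‖ = 1 := by
            simp [hr]
            exact hv0
          rwa [h3] at h2
        exact (hslopeh.mul_const _).add (hcont.mul_const _)
      have hposlim : (0:ℝ) ≤ (-(n w) / r) * (Ψ v - (-ξ) v) + 1 * (Ψ w - (-ξ) w) := by
        refine ge_of_tendsto hF ?_
        have hwr : 0 < r / (‖w‖ + 1) := by positivity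
        filter_upwards [Ioo_mem_nhdsGT_of_mem (Set.mem_Ico.mpr ⟨le_rfl, hwr⟩)]
          with s hs
        obtain ⟨hs0, hs1⟩ := hs
        have hNpos : 0 < ‖v + s • w‖ := by
          have h1 : ‖v‖ - ‖s • w‖ ≤ ‖v + s • w‖ := by
            have := norm_sub_norm_le v (-(s • w))
            calc ‖v‖ - ‖s • w‖ = ‖v‖ - ‖-(s • w)‖ := by rw [norm_neg]
              _ ≤ ‖v - -(s • w)‖ := norm_sub_norm_le _ _
              _ = ‖v + s • w‖ := by congr 1; abel
          have h2 : ‖s • w‖ < r := by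
            rw [norm_smul, Real.norm_eq_abs, abs_of_pos hs0]
            have hle : s * ‖w‖ ≤ s * (‖w‖ + 1) := by nlinarith [hs0.le]
            have hlt : s * (‖w‖ + 1) < (r / (‖w‖ + 1)) * (‖w‖ + 1) := by
              have hwpos : (0:ℝ) < ‖w‖ + 1 := by positivity
              exact mul_lt_mul_of_pos_right hs1 hwpos
            have : (r / (‖w‖ + 1)) * (‖w‖ + 1) = r := by field_simp
            linarith
          linarith [h1, h2]
        set N : ℝ := ‖v + s • w‖ with hN
        set h : ℝ := r / N with hhdef
        have hhpos : 0 < h := div_pos hrpos hNpos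
        have hball : ‖(x₀' + h • (v + s • w)) - x₀'‖ ≤ ε := by
          rw [add_sub_cancel_left, norm_smul, Real.norm_eq_abs, abs_of_pos hhpos]
          rw [hhdef]
          rw [div_mul_cancel₀ _ hNpos.ne']
          exact hx₁mem
        have hst := star _ hball
        rw [add_sub_cancel_left] at hst
        have hxx : x₀' + h • (v + s • w) - x₁ = h • (v + s • w) - v := by
          rw [hv]; abel
        rw [hxx] at hst
        have hlin : ξ (h • (v + s • w) - v) = h * (ξ v + s * ξ w) - ξ v := by
          rw [map_sub, ξ.map_smul, map_add, ξ.map_smul]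
          simp only [smul_eq_mul]
          try ring
        have hΨh : Ψ (h • (v + s • w)) ≤ h * (Ψ v + s * Ψ w) := by
          rw [hΨhom h hhpos.le]
          have h1 : Ψ (v + s • w) ≤ Ψ v + Ψ (s • w) := hΨsub v (s • w)
          rw [hΨhom s hs0.le] at h1
          nlinarith [h1, hhpos]
        rw [hlin] at hst
        -- hst : Ψ v - Ψ (h • (v + s•w)) ≤ h * (ξ v + s * ξ w) - ξ v
        have hmain : 0 ≤ (h - 1) * (Ψ v - (-ξ) v) + s * (h * (Ψ w - (-ξ) w)) := by
          simp only [ContinuousLinearMap.neg_apply]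
          nlinarith [hst, hΨh]
        have hs0' : (0:ℝ) < s - 0 := by linarith
        rw [slope_def_field]
        have hf0 : r / ‖v + (0:ℝ) • w‖ = 1 := by
          simp [hr]
          exact hv0
        rw [hf0]
        rw [← hN, ← hhdef]
        calc (0:ℝ) ≤ ((h - 1) * (Ψ v - (-ξ) v) + s * (h * (Ψ w - (-ξ) w))) / s :=
              div_nonneg hmain hs0.le
          _ = (h - 1) / (s - 0) * (Ψ v - (-ξ) v) + h * (Ψ w - (-ξ) w) := by
              rw [sub_zero]; field_simp
      have hcalc : (-(n w) / r) * (Ψ v - (-ξ) v) = lam * n w := by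
        rw [hlam]; field_simp; ring
      rw [hcalc, one_mul] at hposlim
      linarith
    -- assemble
    set η : X →L[ℝ] ℝ := -ξ - lam • n with hη
    have hηmem : η ∈ subdiffZero Ψ := by
      intro w
      have := hkey w
      simpa [hη, ContinuousLinearMap.sub_apply, ContinuousLinearMap.smul_apply,
        smul_eq_mul] using this
    have hξη : ξ + η = -(lam • n) := by rw [hη]; abel
    have hnormη : ‖ξ + η‖ = lam := by
      rw [hξη, norm_neg, norm_smul lam n, Real.norm_eq_abs, abs_of_nonneg hlamnn,
        hnorm1, mul_one]
    have hdlam : distToSubdiff Ψ ξ = lam := by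
      apply le_antisymm
      · exact csInf_le ⟨0, by rintro y ⟨η', _, rfl⟩; exact norm_nonneg _⟩
          ⟨η, hηmem, hnormη⟩
      · refine le_csInf ⟨‖ξ + η‖, η, hηmem, rfl⟩ ?_
        rintro y ⟨η', hη', rfl⟩
        have h1 : (ξ + η') (-v) ≤ ‖ξ + η'‖ * r := by
          calc (ξ + η') (-v) ≤ |(ξ + η') (-v)| := le_abs_self _
            _ ≤ ‖ξ + η'‖ * ‖-v‖ := (ξ + η').le_opNorm (-v)
            _ = ‖ξ + η'‖ * r := by rw [norm_neg]
        have h2 : lam * r ≤ (ξ + η') (-v) := by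
          have h3 := hη' v
          have h4 : (ξ + η') (-v) = -(ξ v) - η' v := by
            rw [map_neg, ContinuousLinearMap.add_apply]; ring
          rw [h4]
          have h5 : (-ξ) v = -(ξ v) := rfl
          rw [h5] at hlamr
          linarith
        exact le_of_mul_le_mul_right (by linarith) hrpos
    refine ⟨?_, ⟨η, hηmem, by rw [hnormη, hdlam]⟩⟩
    rw [hdlam]
    linarith [hlamr]

theorem stmt_15
    {X : Type*} [NormedAddCommGroup X] [NormedSpace ℝ X] [FiniteDimensional ℝ X]
    [Nontrivial X]
    (hnorm : ContDiffOn ℝ 1 (fun x : X => ‖x‖) {(0 : X)}ᶜ)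
    (T : ℝ) (hT : 0 < T)
    (E Et : ℝ → X → ℝ) (DE : ℝ → X → X →L[ℝ] ℝ)
    (hEnn : ∀ t ∈ Set.Icc (0:ℝ) T, ∀ x : X, 0 ≤ E t x)
    (hEt : ∀ x : X, ∀ t ∈ Set.Icc (0:ℝ) T,
      HasDerivWithinAt (fun s => E s x) (Et t x) (Set.Icc 0 T) t)
    (hDE : ∀ t ∈ Set.Icc (0:ℝ) T, ∀ x : X, HasFDerivAt (fun y => E t y) (DE t x) x)
    (hEtc : ContinuousOn (fun p : ℝ × X => Et p.1 p.2) (Set.Icc 0 T ×ˢ Set.univ))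
    (hDEc : ContinuousOn (fun p : ℝ × X => DE p.1 p.2) (Set.Icc 0 T ×ˢ Set.univ))
    (Ψ : X → ℝ) (hΨnn : ∀ v, 0 ≤ Ψ v) (hΨconv : ConvexOn ℝ Set.univ Ψ)
    (hΨhom : ∀ c : ℝ, 0 ≤ c → ∀ v : X, Ψ (c • v) = c * Ψ v)
    (hΨpos : ∀ v : X, v ≠ 0 → 0 < Ψ v)
    (t' : ℝ) (ht' : t' ∈ Set.Icc (0:ℝ) T)
    (ε : ℝ) (hε : 0 < ε) (x₀' x₁ : X)
    (hx₁mem : ‖x₁ - x₀'‖ ≤ ε)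
    (hx₁min : ∀ x : X, ‖x - x₀'‖ ≤ ε →
      E t' x₁ + Ψ (x₁ - x₀') ≤ E t' x + Ψ (x - x₀')) :
    (-(DE t' x₁)) (x₁ - x₀') =
      Ψ (x₁ - x₀') + distToSubdiff Ψ (DE t' x₁) * ‖x₁ - x₀'‖ ∧
    ∃ η ∈ subdiffZero Ψ, ‖DE t' x₁ + η‖ = distToSubdiff Ψ (DE t' x₁) :=
  stmt_15_aux hnorm T hT E Et DE hEnn hEt hDE hEtc hDEc Ψ hΨnn hΨconv hΨhom hΨpos t' ht' ε hε x₀' x₁ hx₁mem hx₁min
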